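/- In the ring MvPowerSeries ℕ+ ℤ, let S be the power series whose coefficient at each m : ℕ+ →₀ ℕ is the hyper-Catalan number C_m. Then for every m ≠ 0, the coefficient of S at m equals Σ_{n ≥ 1} (coefficient at m of X_n · S^n), where X_n denotes the monomial variable indexed by n; only finitely many terms of this sum are nonzero (namely those n with m(n) ≥ 1). Moreover the coefficient of S at 0 is 1. -/

import Mathlib

/-- The hyper-Catalan number
`C_m = (Σ n·m n)! / ((1 + Σ (n−1)·m n)! · Π (m n)!)`. -/
def hyperCatalan (m : ℕ+ →₀ ℕ) : ℕ :=
  (m.sum fun n k => (n : ℕ) * k).factorial /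
    ((1 + m.sum fun n k => ((n : ℕ) - 1) * k).factorial * m.prod fun _ k => k.factorial)

open Finsupp

namespace HCat

open MvPowerSeries

def wE (m : ℕ+ →₀ ℕ) : ℕ := m.sum fun n k => (n : ℕ) * k
def wV (m : ℕ+ →₀ ℕ) : ℕ := m.sum fun n k => ((n : ℕ) - 1) * k
def wF (m : ℕ+ →₀ ℕ) : ℕ := m.sum fun _ k => k
def P (m : ℕ+ →₀ ℕ) : ℕ := m.prod fun _ k => k.factorial

noncomputable def D (j : ℕ) (m : ℕ+ →₀ ℕ) : ℚ :=
  ((j : ℚ) + 1) * (wE m + j).factorial / (((1 + wV m + j).factorial : ℚ) * (P m : ℚ))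

lemma wE_add (a b : ℕ+ →₀ ℕ) : wE (a + b) = wE a + wE b := by
  simpa [wE] using Finsupp.sum_add_index' (by simp) (fun i b₁ b₂ => by ring)

lemma wV_add (a b : ℕ+ →₀ ℕ) : wV (a + b) = wV a + wV b := by
  simpa [wV] using Finsupp.sum_add_index' (by simp) (fun i b₁ b₂ => by ring)

lemma wE_single (n : ℕ+) : wE (single n 1) = (n : ℕ) := by
  simp [wE, Finsupp.sum_single_index]

lemma wV_single (n : ℕ+) : wV (single n 1) = (n : ℕ) - 1 := by
  simp [wV, Finsupp.sum_single_index]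

lemma hVF (m : ℕ+ →₀ ℕ) : wE m = wV m + wF m := by
  rw [wE, wV, wF, Finsupp.sum, Finsupp.sum, Finsupp.sum, ← Finset.sum_add_distrib]
  refine Finset.sum_congr rfl fun n _ => ?_
  have h1 : 1 ≤ (n : ℕ) := n.one_le
  have : ((n:ℕ) - 1) * m n + m n = ((n:ℕ) - 1 + 1) * m n := by ring
  rw [this, Nat.sub_add_cancel h1]

lemma P_pos (m : ℕ+ →₀ ℕ) : 0 < P m :=
  Finset.prod_pos fun i _ => Nat.factorial_pos _

lemma P_add_single (u : ℕ+ →₀ ℕ) (n : ℕ+) :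
    P (u + single n 1) = (u n + 1) * P u := by
  classical
  have hsub : u.support ⊆ u.support ∪ {n} := Finset.subset_union_left
  have hsub2 : (u + single n 1).support ⊆ u.support ∪ {n} := by
    refine Finsupp.support_add.trans ?_
    exact Finset.union_subset_union (le_refl _) Finsupp.support_single_subset
  have hn : n ∈ u.support ∪ {n} := Finset.mem_union_right _ (Finset.mem_singleton_self n)
  rw [P, P, Finsupp.prod_of_support_subset _ hsub2 _ (fun i _ => Nat.factorial_zero),
    Finsupp.prod_of_support_subset _ hsub _ (fun i _ => Nat.factorial_zero),
    ← Finset.mul_prod_erase _ _ hn, ← Finset.mul_prod_erase _ _ hn]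
  have h1 : (u + single n 1 : ℕ+ →₀ ℕ) n = u n + 1 := by
    rw [Finsupp.add_apply, Finsupp.single_apply, if_pos rfl]
  rw [h1]
  have h2 : ∀ i ∈ (u.support ∪ {n}).erase n, ((u + single n 1 : ℕ+ →₀ ℕ) i).factorial = (u i).factorial := by
    intro i hi
    have hne : i ≠ n := Finset.ne_of_mem_erase hi
    rw [Finsupp.add_apply, Finsupp.single_apply, if_neg (fun h => hne h.symm), add_zero]
  rw [Finset.prod_congr rfl h2, Nat.factorial_succ]
  ring

lemma wE_pos (m : ℕ+ →₀ ℕ) (hm : m ≠ 0) : 1 ≤ wE m := by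
  obtain ⟨n, hn⟩ := Finsupp.support_nonempty_iff.mpr hm
  have hmn : 1 ≤ m n := Nat.one_le_iff_ne_zero.mpr (Finsupp.mem_support_iff.mp hn)
  calc 1 ≤ (n : ℕ) * m n := Nat.one_le_iff_ne_zero.mpr (by positivity)
    _ ≤ ∑ i ∈ m.support, (i : ℕ) * m i :=
        Finset.single_le_sum (f := fun i : ℕ+ => (i : ℕ) * m i) (fun i _ => Nat.zero_le _) hn
    _ = wE m := rfl


lemma D_zero (j : ℕ) : D j 0 = 1 := by
  have h : (1 + j).factorial = (j + 1) * j.factorial := by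
    rw [add_comm 1 j, Nat.factorial_succ]
  simp only [D, wE, wV, P, Finsupp.sum_zero_index, Finsupp.prod_zero_index, zero_add, add_zero, h]
  have hj : (j.factorial : ℚ) ≠ 0 := by positivity
  push_cast
  field_simp

lemma D_term (u : ℕ+ →₀ ℕ) (n : ℕ+) (j : ℕ) :
    D (j + (n:ℕ)) u
      = ((j:ℚ) + (n:ℕ) + 1) * ((u n : ℚ) + 1) * ((wE (u + single n 1) + j).factorial : ℚ)
        / (((1 + wV (u + single n 1) + (j + 1)).factorial : ℚ) * (P (u + single n 1) : ℚ)) := by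
  have h1 : 1 ≤ (n:ℕ) := n.one_le
  have e1 : wE u + (j + (n:ℕ)) = wE (u + single n 1) + j := by
    rw [wE_add, wE_single]; omega
  have e2 : 1 + wV u + (j + (n:ℕ)) = 1 + wV (u + single n 1) + (j + 1) := by
    rw [wV_add, wV_single]; omega
  rw [D, e1, e2, P_add_single]
  have hf : (((1 + wV (u + single n 1) + (j + 1)).factorial : ℚ)) ≠ 0 := by positivity
  have hp : ((P u : ℚ)) ≠ 0 := by
    have := P_pos u; positivity
  have hun : ((u n : ℚ) + 1) ≠ 0 := by positivity
  push_cast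
  field_simp

lemma sub_single_add (m : ℕ+ →₀ ℕ) (n : ℕ+) (hmn : 1 ≤ m n) :
    (m - single n 1) + single n 1 = m := by
  ext a
  rw [Finsupp.add_apply, Finsupp.tsub_apply, Finsupp.single_apply]
  split
  · next h => subst h; omega
  · omega

lemma sub_single_apply (m : ℕ+ →₀ ℕ) (n : ℕ+) (hmn : 1 ≤ m n) :
    ((m - single n 1 : ℕ+ →₀ ℕ) n : ℚ) + 1 = (m n : ℚ) := by
  rw [Finsupp.tsub_apply, Finsupp.single_apply, if_pos rfl]
  have h : m n - 1 + 1 = m n := by omega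
  exact_mod_cast congrArg (fun x : ℕ => (x : ℚ)) h

lemma D_succ (m : ℕ+ →₀ ℕ) (j : ℕ) :
    D (j+1) m = D j m + ∑ n ∈ m.support, D (j + (n:ℕ)) (m - single n 1) := by
  classical
  have key : ∀ n ∈ m.support, D (j + (n:ℕ)) (m - single n 1)
      = (((j:ℚ) + (n:ℕ) + 1) * (m n : ℚ))
        * (((wE m + j).factorial : ℚ) / (((1 + wV m + (j+1)).factorial : ℚ) * (P m : ℚ))) := by
    intro n hn
    have hmn : 1 ≤ m n := Nat.one_le_iff_ne_zero.mpr (Finsupp.mem_support_iff.mp hn)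
    rw [D_term, sub_single_add m n hmn, sub_single_apply m n hmn]
    ring
  rw [Finset.sum_congr rfl key, ← Finset.sum_mul]
  have hsum : ∑ n ∈ m.support, (((j:ℚ) + (n:ℕ) + 1) * (m n : ℚ))
      = ((j:ℚ) + 1) * (wF m : ℚ) + (wE m : ℚ) := by
    have hF : (wF m : ℚ) = ∑ n ∈ m.support, (m n : ℚ) := by
      rw [wF, Finsupp.sum]; push_cast; rfl
    have hE : (wE m : ℚ) = ∑ n ∈ m.support, ((n:ℕ) : ℚ) * (m n : ℚ) := by
      rw [wE, Finsupp.sum]; push_cast; rfl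
    rw [hF, hE, Finset.mul_sum, ← Finset.sum_add_distrib]
    exact Finset.sum_congr rfl fun n _ => by ring
  rw [hsum]
  have hEVF : wE m = wV m + wF m := hVF m
  simp only [D, hEVF]
  have h1 : (wV m + wF m + (j+1)) = (wV m + wF m + j) + 1 := by omega
  have h2 : (1 + wV m + (j+1)) = (1 + wV m + j) + 1 := by omega
  rw [h1, h2, Nat.factorial_succ, Nat.factorial_succ]
  have ha : ((wV m + wF m + j).factorial : ℚ) ≠ 0 := by positivity
  have hb : ((1 + wV m + j).factorial : ℚ) ≠ 0 := by positivity
  have hp : ((P m : ℚ)) ≠ 0 := by have := P_pos m; positivity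
  push_cast
  field_simp
  ring


lemma D_term0 (m : ℕ+ →₀ ℕ) (n : ℕ+) (hmn : 1 ≤ m n) (E' : ℕ) (hE' : wE m = E' + 1) :
    D ((n:ℕ) - 1) (m - single n 1)
      = ((n:ℕ):ℚ) * (m n : ℚ) * ((E'.factorial : ℚ) / (((1 + wV m).factorial : ℚ) * (P m : ℚ))) := by
  have h1 : 1 ≤ (n:ℕ) := n.one_le
  have hu := sub_single_add m n hmn
  have hwe : wE (m - single n 1) + (n:ℕ) = wE m := by
    conv_rhs => rw [← hu]
    rw [wE_add, wE_single]
  have hwv : wV (m - single n 1) + ((n:ℕ) - 1) = wV m := by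
    conv_rhs => rw [← hu]
    rw [wV_add, wV_single]
  have hp : P m = (((m - single n 1 : ℕ+ →₀ ℕ)) n + 1) * P (m - single n 1) := by
    conv_lhs => rw [← hu]
    rw [P_add_single]
  have e1 : wE (m - single n 1) + ((n:ℕ) - 1) = E' := by omega
  have e2 : 1 + wV (m - single n 1) + ((n:ℕ) - 1) = 1 + wV m := by omega
  have e3 : (((n:ℕ) - 1 : ℕ) : ℚ) + 1 = ((n:ℕ) : ℚ) := by
    have h : (n:ℕ) - 1 + 1 = (n:ℕ) := by omega
    exact_mod_cast congrArg (fun x : ℕ => (x : ℚ)) h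
  rw [D, e1, e2, e3, hp, ← sub_single_apply m n hmn]
  have hf : (((1 + wV m).factorial : ℚ)) ≠ 0 := by positivity
  have hpu : ((P (m - single n 1) : ℚ)) ≠ 0 := by
    have := P_pos (m - single n 1); positivity
  have hun : (((m - single n 1 : ℕ+ →₀ ℕ) n : ℚ) + 1) ≠ 0 := by positivity
  push_cast
  field_simp

lemma D_base (m : ℕ+ →₀ ℕ) (hm : m ≠ 0) :
    D 0 m = ∑ n ∈ m.support, D ((n:ℕ) - 1) (m - single n 1) := by
  classical
  obtain ⟨E', hE'⟩ : ∃ E', wE m = E' + 1 := ⟨wE m - 1, by have := wE_pos m hm; omega⟩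
  have key : ∀ n ∈ m.support, D ((n:ℕ) - 1) (m - single n 1)
      = (((n:ℕ):ℚ) * (m n : ℚ)) * ((E'.factorial : ℚ) / (((1 + wV m).factorial : ℚ) * (P m : ℚ))) :=
    fun n hn => D_term0 m n (Nat.one_le_iff_ne_zero.mpr (Finsupp.mem_support_iff.mp hn)) E' hE'
  rw [Finset.sum_congr rfl key, ← Finset.sum_mul]
  have hE : (wE m : ℚ) = ∑ n ∈ m.support, ((n:ℕ):ℚ) * (m n : ℚ) := by
    rw [wE, Finsupp.sum]; push_cast; rfl
  rw [← hE]
  have h0 : wE m + 0 = E' + 1 := by omega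
  have h1 : 1 + wV m + 0 = 1 + wV m := by omega
  rw [D, h0, h1, Nat.factorial_succ, hE']
  have hf : (((1 + wV m).factorial : ℚ)) ≠ 0 := by positivity
  have hp : ((P m : ℚ)) ≠ 0 := by have := P_pos m; positivity
  push_cast
  field_simp
  norm_num

lemma exists_nat_sum {α : Type*} {s : Finset α} {f : α → ℚ}
    (h : ∀ i ∈ s, ∃ z : ℕ, f i = z) : ∃ z : ℕ, ∑ i ∈ s, f i = z := by
  classical
  induction s using Finset.induction_on with
  | empty => exact ⟨0, by simp⟩
  | insert _ _ hx ih =>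
    rename_i a s'
    obtain ⟨z1, hz1⟩ := h _ (Finset.mem_insert_self _ _)
    obtain ⟨z2, hz2⟩ := ih (fun i hi => h i (Finset.mem_insert_of_mem hi))
    exact ⟨z1 + z2, by rw [Finset.sum_insert hx, hz1, hz2]; push_cast; ring⟩

lemma wE_sub_lt (m : ℕ+ →₀ ℕ) (n : ℕ+) (hn : n ∈ m.support) :
    wE (m - single n 1) < wE m := by
  have hmn : 1 ≤ m n := Nat.one_le_iff_ne_zero.mpr (Finsupp.mem_support_iff.mp hn)
  have hu := sub_single_add m n hmn
  have hwe : wE (m - single n 1) + (n:ℕ) = wE m := by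
    conv_rhs => rw [← hu]
    rw [wE_add, wE_single]
  have h1 : 1 ≤ (n:ℕ) := n.one_le
  omega

lemma D_int : ∀ e : ℕ, ∀ m : ℕ+ →₀ ℕ, wE m = e → ∀ j : ℕ, ∃ z : ℕ, D j m = z := by
  intro e
  induction e using Nat.strong_induction_on with
  | _ e ih =>
    intro m hme j
    induction j with
    | zero =>
      by_cases hm : m = 0
      · exact ⟨1, by rw [hm, D_zero]; norm_num⟩
      · rw [D_base m hm]
        exact exists_nat_sum (fun n hn => ih _ (hme ▸ wE_sub_lt m n hn) _ rfl _)
    | succ j ihj =>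
      rw [D_succ]
      obtain ⟨z1, hz1⟩ := ihj
      obtain ⟨z2, hz2⟩ := exists_nat_sum (fun n hn => ih _ (hme ▸ wE_sub_lt m n hn) _ rfl _)
      exact ⟨z1 + z2, by rw [hz1, hz2]; push_cast; ring⟩

lemma hyperCatalan_def (m : ℕ+ →₀ ℕ) :
    hyperCatalan m = (wE m).factorial / ((1 + wV m).factorial * P m) := rfl

lemma hyperCatalan_cast (m : ℕ+ →₀ ℕ) : (hyperCatalan m : ℚ) = D 0 m := by
  obtain ⟨z, hz⟩ := D_int (wE m) m rfl 0
  have hpos := P_pos m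
  have hne : (((1 + wV m + 0).factorial : ℚ) * (P m : ℚ)) ≠ 0 := by positivity
  rw [D, div_eq_iff hne] at hz
  simp only [add_zero] at hz
  norm_num at hz
  have hnat : (wE m).factorial = z * ((1 + wV m).factorial * P m) := by exact_mod_cast hz
  have hden : 0 < (1 + wV m).factorial * P m := Nat.mul_pos (Nat.factorial_pos _) hpos
  have hhc : hyperCatalan m = z := by
    rw [hyperCatalan_def, hnat, Nat.mul_div_cancel _ hden]
  rw [hhc, D, eq_div_iff hne]
  simp only [add_zero]
  push_cast
  rw [hnat]
  push_cast
  ring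

lemma coeff_X_mul (m : ℕ+ →₀ ℕ) (n : ℕ+) (φ : MvPowerSeries ℕ+ ℤ) :
    coeff m (X n * φ)
      = if single n 1 ≤ m then coeff (m - single n 1) φ else 0 := by
  rw [X_def, coeff_monomial_mul]
  split <;> simp

lemma mem_support_iff_le (m : ℕ+ →₀ ℕ) (n : ℕ+) :
    n ∈ m.support ↔ single n 1 ≤ m := by
  rw [Finsupp.mem_support_iff, Finsupp.single_le_iff, Nat.one_le_iff_ne_zero]

lemma hyperCatalan_zero : hyperCatalan 0 = 1 := by
  simp [hyperCatalan, Finsupp.sum_zero_index, Finsupp.prod_zero_index]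

lemma coeff_pow (S : MvPowerSeries ℕ+ ℤ)
    (hS : ∀ m : ℕ+ →₀ ℕ, coeff m S = hyperCatalan m) :
    ∀ e : ℕ, ∀ m : ℕ+ →₀ ℕ, wE m = e → ∀ j : ℕ,
      ((coeff m (S ^ (j+1)) : ℤ) : ℚ) = D j m := by
  classical
  intro e
  induction e using Nat.strong_induction_on with
  | _ e ih =>
    have hS0 : coeff 0 S = 1 := by rw [hS 0, hyperCatalan_zero]; norm_num
    have claim1 : ∀ a : ℕ+ →₀ ℕ, a ≠ 0 → wE a ≤ e →
        coeff a S = ∑ n ∈ a.support, coeff a (X n * S ^ (n:ℕ)) := by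
      intro a ha hae
      have hq : ((coeff a S : ℤ) : ℚ)
          = ∑ n ∈ a.support, ((coeff a (X n * S ^ (n:ℕ)) : ℤ) : ℚ) := by
        rw [hS a]
        push_cast
        rw [hyperCatalan_cast, D_base a ha]
        refine Finset.sum_congr rfl fun n hn => ?_
        rw [coeff_X_mul, if_pos ((mem_support_iff_le a n).mp hn)]
        have h1 : 1 ≤ (n : ℕ) := n.one_le
        have hexp : S ^ (n:ℕ) = S ^ (((n:ℕ) - 1) + 1) := by congr 1; omega
        rw [hexp]
        exact (ih _ (lt_of_lt_of_le (wE_sub_lt a n hn) hae) _ rfl _).symm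
      exact_mod_cast hq
    intro m hme j
    induction j with
    | zero =>
      rw [pow_one, hS m]
      push_cast
      exact hyperCatalan_cast m
    | succ j ihj =>
      by_cases hm : m = 0
      · subst hm
        rw [coeff_zero_eq_constantCoeff_apply, map_pow,
          ← coeff_zero_eq_constantCoeff_apply, hS0, one_pow, D_zero]
        norm_num
      · have hsplit : coeff m (S ^ (j+1+1)) = coeff m (S ^ (j+1))
            + ∑ n ∈ m.support, coeff m (X n * S ^ ((n:ℕ) + (j+1))) := by
          rw [pow_succ', coeff_mul]
          have step1 : ∀ p ∈ Finset.HasAntidiagonal.antidiagonal m,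
              coeff p.1 S * coeff p.2 (S ^ (j+1))
                = (if p.1 = 0 then coeff p.2 (S ^ (j+1)) else 0)
                  + (∑ n ∈ m.support, coeff p.1 (X n * S ^ (n:ℕ)))
                    * coeff p.2 (S ^ (j+1)) := by
            intro p hp
            have hpm : p.1 + p.2 = m := Finset.HasAntidiagonal.mem_antidiagonal.mp hp
            by_cases hp1 : p.1 = 0
            · rw [if_pos hp1, hp1, hS0]
              have : ∀ n ∈ m.support, coeff (0 : ℕ+ →₀ ℕ) (X n * S ^ (n:ℕ)) = 0 := by
                intro n _
                rw [coeff_X_mul, if_neg]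
                intro hle
                have := (Finsupp.single_le_iff.mp hle)
                simp at this
              rw [Finset.sum_congr rfl this]
              simp
            · rw [if_neg hp1, zero_add]
              congr 1
              have hle : p.1 ≤ m := hpm ▸ self_le_add_right p.1 p.2
              have hwE : wE p.1 ≤ e := by
                have : wE p.1 + wE p.2 = e := by rw [← wE_add, hpm, hme]
                omega
              rw [claim1 p.1 hp1 hwE]
              refine (Finset.sum_subset (Finsupp.support_mono hle) fun n _ hn => ?_)
              rw [coeff_X_mul, if_neg (fun h => hn ((mem_support_iff_le p.1 n).mpr h))]
          rw [Finset.sum_congr rfl step1, Finset.sum_add_distrib]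
          congr 1
          · rw [Finset.sum_eq_single ((0 : ℕ+ →₀ ℕ), m)]
            · rw [if_pos rfl]
            · intro p hp hne
              have hpm : p.1 + p.2 = m := Finset.HasAntidiagonal.mem_antidiagonal.mp hp
              rw [if_neg]
              intro hp1
              exact hne (Prod.ext hp1 (by rw [← hpm, hp1, zero_add]))
            · intro habs
              exact absurd (Finset.HasAntidiagonal.mem_antidiagonal.mpr (zero_add m)) habs
          · have hxy : ∀ p ∈ Finset.HasAntidiagonal.antidiagonal m,
                (∑ n ∈ m.support, coeff p.1 (X n * S ^ (n:ℕ))) * coeff p.2 (S ^ (j+1))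
                = ∑ n ∈ m.support, coeff p.1 (X n * S ^ (n:ℕ)) * coeff p.2 (S ^ (j+1)) :=
              fun p _ => Finset.sum_mul _ _ _
            rw [Finset.sum_congr rfl hxy, Finset.sum_comm]
            refine Finset.sum_congr rfl fun n _ => ?_
            rw [← coeff_mul, mul_assoc, ← pow_add]
        rw [hsplit]
        push_cast
        rw [ihj]
        have hterm : ∀ n ∈ m.support, ((coeff m (X n * S ^ ((n:ℕ) + (j+1))) : ℤ) : ℚ)
            = D (j + (n:ℕ)) (m - single n 1) := by
          intro n hn
          rw [coeff_X_mul, if_pos ((mem_support_iff_le m n).mp hn)]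
          have hexp : S ^ ((n:ℕ) + (j+1)) = S ^ ((j + (n:ℕ)) + 1) := by congr 1; omega
          rw [hexp]
          exact ih _ (hme ▸ wE_sub_lt m n hn) _ rfl _
        rw [Finset.sum_congr rfl hterm, D_succ]

end HCat

/-- the hyper-Catalan power series `S` satisfies the functional equation
`S = 1 + Σ_{n ≥ 1} Xₙ·Sⁿ`, coefficientwise. -/
theorem hyperCatalan_series_functional_equation (S : MvPowerSeries ℕ+ ℤ)
    (hS : ∀ m : ℕ+ →₀ ℕ, MvPowerSeries.coeff m S = hyperCatalan m) :
    (∀ m : ℕ+ →₀ ℕ, m ≠ 0 →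
        MvPowerSeries.coeff m S
          = ∑ᶠ n : ℕ+, MvPowerSeries.coeff m (MvPowerSeries.X n * S ^ (n : ℕ))) ∧
      MvPowerSeries.coeff 0 S = 1 := by
  classical
  constructor
  · intro m hm
    have hfin : ∀ n : ℕ+, n ∉ m.support →
        MvPowerSeries.coeff m (MvPowerSeries.X n * S ^ (n : ℕ)) = 0 := by
      intro n hn
      rw [HCat.coeff_X_mul, if_neg (fun h => hn ((HCat.mem_support_iff_le m n).mpr h))]
    have hsub : (Function.support fun n : ℕ+ =>
        MvPowerSeries.coeff m (MvPowerSeries.X n * S ^ (n : ℕ))) ⊆ ↑m.support := by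
      intro n hn
      by_contra hns
      exact hn (hfin n (by simpa using hns))
    rw [finsum_eq_sum_of_support_subset _ hsub]
    have hq : ((MvPowerSeries.coeff m S : ℤ) : ℚ)
        = ∑ n ∈ m.support,
            ((MvPowerSeries.coeff m (MvPowerSeries.X n * S ^ (n:ℕ)) : ℤ) : ℚ) := by
      rw [hS m]
      push_cast
      rw [HCat.hyperCatalan_cast, HCat.D_base m hm]
      refine Finset.sum_congr rfl fun n hn => ?_
      rw [HCat.coeff_X_mul, if_pos ((HCat.mem_support_iff_le m n).mp hn)]
      have h1 : 1 ≤ (n : ℕ) := n.one_le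
      have hexp : S ^ (n:ℕ) = S ^ (((n:ℕ) - 1) + 1) := by congr 1; omega
      rw [hexp]
      exact (HCat.coeff_pow S hS _ _ rfl _).symm
    exact_mod_cast hq
  · rw [hS 0, HCat.hyperCatalan_zero]
    norm_num
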